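/- Two-point propagator relations: let H : ℝ → Matrix n n ℂ be continuous with each H(t) Hermitian, and for each s ∈ ℝ let V(·;s) : ℝ → Matrix n n ℂ be the solution of d/dt V(t;s) = -i·H(t)·V(t;s) with V(s;s) = 1. Then for all t₁, t₂, t₃ ∈ ℝ: (i) each V(t₂;t₁) is unitary with (V(t₂;t₁))ᴴ = V(t₁;t₂), and (ii) V(t₃;t₂)·V(t₂;t₁) = V(t₃;t₁). -/

import Mathlib

open Matrix

attribute [local instance] Matrix.normedAddCommGroup Matrix.normedSpace

section aux
variable {n : ℕ}

lemma matrix_hasDerivAt_iff {f : ℝ → Matrix (Fin n) (Fin n) ℂ}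
    {f' : Matrix (Fin n) (Fin n) ℂ} {t : ℝ} :
    HasDerivAt f f' t ↔ ∀ i j, HasDerivAt (fun τ => f τ i j) (f' i j) t := by
  exact hasDerivAt_pi.trans (forall_congr' fun i => hasDerivAt_pi)

lemma matrix_hasDerivAt_mul {A B : ℝ → Matrix (Fin n) (Fin n) ℂ}
    {A' B' : Matrix (Fin n) (Fin n) ℂ} {t : ℝ}
    (hA : HasDerivAt A A' t) (hB : HasDerivAt B B' t) :
    HasDerivAt (fun τ => A τ * B τ) (A' * B t + A t * B') t := by
  rw [matrix_hasDerivAt_iff] at *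
  intro i j
  have : ∀ k, HasDerivAt (fun τ => A τ i k * B τ k j)
      (A' i k * B t k j + A t i k * B' k j) t := fun k => (hA i k).mul (hB k j)
  simpa [Matrix.mul_apply, Matrix.add_apply, Finset.sum_add_distrib] using
    HasDerivAt.fun_sum (fun k _ => this k)

lemma matrix_hasDerivAt_conjTranspose {A : ℝ → Matrix (Fin n) (Fin n) ℂ}
    {A' : Matrix (Fin n) (Fin n) ℂ} {t : ℝ} (hA : HasDerivAt A A' t) :
    HasDerivAt (fun τ => (A τ)ᴴ) A'ᴴ t := by
  rw [matrix_hasDerivAt_iff] at *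
  intro i j
  simpa [Matrix.conjTranspose_apply] using
    ((hA j i).star)

end aux

/-- the two-point propagator `V(t₂;t₁)` of a continuous Hermitian
Hamiltonian family is unitary with `(V(t₂;t₁))ᴴ = V(t₁;t₂)`, and satisfies the composition
rule `V(t₃;t₂) V(t₂;t₁) = V(t₃;t₁)`. Here `V t s` denotes `V(t;s)`. -/
theorem two_point_propagator_relations {n : ℕ} (hn : 1 ≤ n)
    (H : ℝ → Matrix (Fin n) (Fin n) ℂ)
    (hHcont : Continuous H) (hHherm : ∀ t, (H t).IsHermitian)
    (V : ℝ → ℝ → Matrix (Fin n) (Fin n) ℂ)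
    (hVinit : ∀ s, V s s = 1)
    (hVde : ∀ s t, HasDerivAt (fun τ => V τ s) ((-Complex.I) • (H t * V t s)) t) :
    (∀ t₁ t₂, V t₂ t₁ ∈ Matrix.unitaryGroup (Fin n) ℂ ∧ (V t₂ t₁)ᴴ = V t₁ t₂) ∧
    ∀ t₁ t₂ t₃, V t₃ t₂ * V t₂ t₁ = V t₃ t₁ := by
  -- key identity: (V t a)ᴴ * V t b = (V b a)ᴴ for all t a b
  have key : ∀ a b t, (V t a)ᴴ * V t b = (V b a)ᴴ := by
    intro a b
    have hderiv : ∀ t, HasDerivAt (fun τ => (V τ a)ᴴ * V τ b) 0 t := by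
      intro t
      have h1 := matrix_hasDerivAt_conjTranspose (hVde a t)
      have h2 := hVde b t
      have := matrix_hasDerivAt_mul h1 h2
      convert this using 1
      have hH : (H t)ᴴ = H t := hHherm t
      simp [Matrix.conjTranspose_smul, Matrix.conjTranspose_mul, hH, Matrix.mul_smul,
        Matrix.smul_mul, Matrix.mul_assoc, smul_smul]
    have hconst : ∀ t, (V t a)ᴴ * V t b = (V b a)ᴴ * V b b := by
      intro t
      have := is_const_of_deriv_eq_zero (f := fun τ => (V τ a)ᴴ * V τ b)
        (fun τ => (hderiv τ).differentiableAt) (fun τ => (hderiv τ).deriv) t b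
      simpa using this
    intro t
    rw [hconst t, hVinit, mul_one]
  have hstar : ∀ a t, (V t a)ᴴ * V t a = 1 := by
    intro a t; rw [key a a t, hVinit]; simp
  have hct : ∀ t₁ t₂, (V t₂ t₁)ᴴ = V t₁ t₂ := by
    intro t₁ t₂
    have h := key t₁ t₂ t₁
    rw [hVinit] at h
    simpa using h.symm
  have hright : ∀ a t, V t a * (V t a)ᴴ = 1 := by
    intro a t
    exact mul_eq_one_comm.mp (hstar a t)
  refine ⟨fun t₁ t₂ => ⟨?_, hct t₁ t₂⟩, fun t₁ t₂ t₃ => ?_⟩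
  · rw [Matrix.mem_unitaryGroup_iff]
    exact hright t₁ t₂
  · have h := key t₂ t₁ t₃
    rw [hct t₂ t₁] at h
    calc V t₃ t₂ * V t₂ t₁ = V t₃ t₂ * ((V t₃ t₂)ᴴ * V t₃ t₁) := by rw [h]
      _ = (V t₃ t₂ * (V t₃ t₂)ᴴ) * V t₃ t₁ := by rw [mul_assoc]
      _ = V t₃ t₁ := by rw [hright, one_mul]
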